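/- Let m > 0, k, M, θ̇₀ be real constants. On the open set of points (r, ϑ, φ, p_r, p_ϑ, p_φ) with r > 0, sin ϑ ≠ 0, and 1 + (θ̇₀/m)sin(2φ) > 0, consider the Hamiltonian H' = (1/(2m))[p_r² + M² p_ϑ²/r² + (1 + (θ̇₀/m)sin(2φ)) p_φ²/(r² sin²ϑ)] − k/r and the function D_φ = (1 + (θ̇₀/m)sin(2φ))^{1/2} p_φ. Then D_φ is an integral of motion: the canonical Poisson bracket {H', D_φ} = Σ (∂H'/∂p ∂D_φ/∂q − ∂H'/∂q ∂D_φ/∂p), summed over the three conjugate pairs (r,p_r), (ϑ,p_ϑ), (φ,p_φ), vanishes identically on this set. -/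

import Mathlib

open scoped BigOperators

/-- Phase space: an open subset of ℝ⁶ with spherical-polar coordinates
`z.1 = (r, ϑ, φ)` and conjugate momenta `z.2 = (p_r, p_ϑ, p_φ)`. -/
abbrev PhaseSpace := (Fin 3 → ℝ) × (Fin 3 → ℝ)

/-- Partial derivative of `f` with respect to the position coordinate indexed by `ν`. -/
noncomputable def pdQ (f : PhaseSpace → ℝ) (ν : Fin 3) (z : PhaseSpace) : ℝ :=
  fderiv ℝ f z (Pi.single ν 1, 0)

/-- Partial derivative of `f` with respect to the momentum coordinate indexed by `ν`. -/
noncomputable def pdP (f : PhaseSpace → ℝ) (ν : Fin 3) (z : PhaseSpace) : ℝ :=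
  fderiv ℝ f z (0, Pi.single ν 1)

/-- Canonical Poisson bracket, summed over the three conjugate pairs. -/
noncomputable def canBracket (f g : PhaseSpace → ℝ) (z : PhaseSpace) : ℝ :=
  ∑ ν : Fin 3, (pdP f ν z * pdQ g ν z - pdQ f ν z * pdP g ν z)

/-- The Kepler Hamiltonian in spherical-polar coordinates:
`H' = (1/(2m))[p_r² + M² p_ϑ²/r² + (1 + (θ̇₀/m) sin 2φ) p_φ²/(r² sin²ϑ)] − k/r`. -/
noncomputable def Hsph (m k M θ0 : ℝ) (z : PhaseSpace) : ℝ :=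
  (1 / (2 * m)) * ((z.2 0) ^ 2 + M ^ 2 * (z.2 1) ^ 2 / (z.1 0) ^ 2
      + (1 + (θ0 / m) * Real.sin (2 * z.1 2)) * (z.2 2) ^ 2
        / ((z.1 0) ^ 2 * (Real.sin (z.1 1)) ^ 2))
    - k / z.1 0

/-- `D_φ = (1 + (θ̇₀/m) sin 2φ)^{1/2} p_φ`. -/
noncomputable def Dphi (m θ0 : ℝ) (z : PhaseSpace) : ℝ :=
  Real.sqrt (1 + (θ0 / m) * Real.sin (2 * z.1 2)) * z.2 2

noncomputable def Qc (i : Fin 3) : PhaseSpace →L[ℝ] ℝ :=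
  (ContinuousLinearMap.proj i).comp (ContinuousLinearMap.fst ℝ (Fin 3 → ℝ) (Fin 3 → ℝ))
noncomputable def Pc (i : Fin 3) : PhaseSpace →L[ℝ] ℝ :=
  (ContinuousLinearMap.proj i).comp (ContinuousLinearMap.snd ℝ (Fin 3 → ℝ) (Fin 3 → ℝ))

set_option maxHeartbeats 2000000 in
/-- `D_φ` is an integral of motion for the spherical-polar Kepler Hamiltonian:
`{H', D_φ} = 0` on the open set `r > 0`, `sin ϑ ≠ 0`, `1 + (θ̇₀/m) sin 2φ > 0`. -/
theorem stmt10 (m k M θ0 : ℝ) (hm : 0 < m) :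
    ∀ z : PhaseSpace, 0 < z.1 0 → Real.sin (z.1 1) ≠ 0 →
      0 < 1 + (θ0 / m) * Real.sin (2 * z.1 2) →
      canBracket (Hsph m k M θ0) (Dphi m θ0) z = 0 := by
  intro z hr hϑ hspos
  have hq : ∀ i, HasFDerivAt (fun w : PhaseSpace => w.1 i) (Qc i) z := fun i => (Qc i).hasFDerivAt
  have hp : ∀ i, HasFDerivAt (fun w : PhaseSpace => w.2 i) (Pc i) z := fun i => (Pc i).hasFDerivAt
  -- s(φ) = 1 + (θ0/m) sin(2φ)
  have hsin2 : HasFDerivAt (fun w : PhaseSpace => Real.sin (2 * w.1 2))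
      (Real.cos (2 * z.1 2) • ((2:ℝ) • Qc 2)) z :=
    by have := (Real.hasDerivAt_sin (2 * z.1 2)).comp_hasFDerivAt z ((hq 2).const_mul 2); exact this
  have hS := (hsin2.const_mul (θ0 / m)).const_add 1
  have hsinϑ : HasFDerivAt (fun w : PhaseSpace => Real.sin (w.1 1))
      (Real.cos (z.1 1) • Qc 1) z :=
    by have := (Real.hasDerivAt_sin (z.1 1)).comp_hasFDerivAt z (hq 1); exact this
  have hden : (z.1 0) ^ 2 * (Real.sin (z.1 1)) ^ 2 ≠ 0 :=
    mul_ne_zero (pow_ne_zero 2 hr.ne') (pow_ne_zero 2 hϑ)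
  have dv : ∀ (f g : PhaseSpace → ℝ) (f' g' : PhaseSpace →L[ℝ] ℝ), HasFDerivAt f f' z →
      HasFDerivAt g g' z → g z ≠ 0 →
      HasFDerivAt (fun w => f w / g w) (f z • ((-((g z) ^ 2)⁻¹) • g') + (g z)⁻¹ • f') z := by
    intro f g f' g' hf hg h0
    simpa only [div_eq_mul_inv, Function.comp_def, Pi.mul_def] using hf.mul ((hasDerivAt_inv h0).comp_hasFDerivAt z hg)
  have pw : ∀ (f : PhaseSpace → ℝ) (f' : PhaseSpace →L[ℝ] ℝ), HasFDerivAt f f' z →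
      HasFDerivAt (fun w => f w ^ 2) ((2 * f z ^ 1) • f') z := fun f f' hf =>
    (hasDerivAt_pow 2 (f z)).comp_hasFDerivAt z hf
  have hH := ((((pw _ _ (hp 0)).add
      (dv _ _ _ _ ((pw _ _ (hp 1)).const_mul (M ^ 2)) (pw _ _ (hq 0)) (pow_ne_zero 2 hr.ne'))).add
      (dv _ _ _ _ (hS.mul (pw _ _ (hp 2))) ((pw _ _ (hq 0)).mul (pw _ _ hsinϑ)) hden)).const_mul
      (1 / (2 * m))).sub (dv _ _ _ _ (hasFDerivAt_const k z) (hq 0) hr.ne')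
  have hD := ((Real.hasDerivAt_sqrt hspos.ne').comp_hasFDerivAt z hS).mul (hp 2)
  have eH : fderiv ℝ (Hsph m k M θ0) z = _ := hH.fderiv
  have eD : fderiv ℝ (Dphi m θ0) z = _ := hD.fderiv
  simp only [canBracket, pdQ, pdP, Fin.sum_univ_three, eH, eD]
  simp only [ContinuousLinearMap.add_apply, ContinuousLinearMap.smul_apply,
    ContinuousLinearMap.sub_apply, ContinuousLinearMap.comp_apply,
    ContinuousLinearMap.coe_fst', ContinuousLinearMap.coe_snd',
    ContinuousLinearMap.proj_apply, Qc, Pc, smul_eq_mul, Pi.single_eq_same,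
    Pi.single_eq_of_ne (by decide : (0:Fin 3) ≠ 2), Pi.zero_apply,
    Function.comp]
  simp [Pi.single_apply]
  set s := 1 + (θ0 / m) * Real.sin (2 * z.1 2) with hs
  have hsq : Real.sqrt s * Real.sqrt s = s := Real.mul_self_sqrt hspos.le
  have hsqrt_ne : Real.sqrt s ≠ 0 := (Real.sqrt_pos.mpr hspos).ne'
  field_simp
  ring_nf
  ring_nf at hsq
  rw [hsq]
  ring
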